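/- Every partial H-comodule algebra (A, ρ̄) has an enveloping coaction (globalization). Concretely, regard A ⊗ H as an H-comodule algebra with the coaction δ = I ⊗ Δ, and let B be the smallest H-subcomodule subalgebra of A ⊗ H containing ρ̄(A); then ρ̄: A → B is an injective algebra homomorphism, and (B, δ restricted to B) together with θ = ρ̄ is an enveloping coaction of A. -/

import Mathlib

/-!
STATEMENT 9: Every partial `H`-comodule algebra `(A, ρ̄)` has an enveloping coaction.
Concretely, regard `A ⊗ H` as an `H`-comodule algebra with coaction `δ = I ⊗ Δ`, and let
`B` be the smallest `H`-subcomodule subalgebra of `A ⊗ H` containing `ρ̄(A)`; then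
`ρ̄ : A → B` is an injective algebra homomorphism and `(B, δ|B)` together with `θ = ρ̄`
is an enveloping coaction of `A`.
-/

open TensorProduct

/-- The axioms of a (right) partial coaction `ρ : A → A ⊗ H` of a Hopf algebra `H` on a
unital algebra `A`. -/
structure IsPartialCoaction (k : Type*) [Field k] (H A : Type*) [Ring H] [HopfAlgebra k H]
    [Ring A] [Algebra k A] (ρ : A →ₗ[k] A ⊗[k] H) : Prop where
  map_mul : ∀ a b : A, ρ (a * b) = ρ a * ρ b
  counit_id : ∀ a : A,
    (TensorProduct.rid k A) ((LinearMap.lTensor A Coalgebra.counit) (ρ a)) = a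
  coassoc : ∀ a : A,
    (LinearMap.rTensor H ρ) (ρ a) =
      (ρ 1 ⊗ₜ[k] (1 : H)) *
        ((TensorProduct.assoc k A H H).symm ((LinearMap.lTensor A Coalgebra.comul) (ρ a)))

noncomputable section

variable (k : Type*) [Field k] (H A : Type*) [Ring H] [HopfAlgebra k H] [Ring A] [Algebra k A]

/-- The coaction `δ = I ⊗ Δ` making `A ⊗ H` an `H`-comodule algebra. -/
def trivialCoaction : A ⊗[k] H →ₗ[k] (A ⊗[k] H) ⊗[k] H :=
  (TensorProduct.assoc k A H H).symm.toLinearMap ∘ₗ LinearMap.lTensor A Coalgebra.comul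

/-- A non-unital subalgebra `W` of the `H`-comodule algebra `(A ⊗ H, δ = I ⊗ Δ)` is an
`H`-subcomodule subalgebra when `δ(W) ⊆ W ⊗ H`. -/
def IsSubcomoduleSubalg (W : NonUnitalSubalgebra k (A ⊗[k] H)) : Prop :=
  ∀ w ∈ W, trivialCoaction k H A w ∈
    LinearMap.range (LinearMap.rTensor H (Submodule.subtype W.toSubmodule))


end

set_option maxHeartbeats 1000000
set_option synthInstance.maxHeartbeats 400000

noncomputable section AuxDefs
open LinearMap

variable (k : Type*) [Field k]

/-- Contraction of the right tensor factor of `M ⊗ N` along a functional on `N`. -/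
def contr (M N : Type*) [AddCommGroup M] [Module k M] [AddCommGroup N] [Module k N]
    (f : N →ₗ[k] k) : M ⊗[k] N →ₗ[k] M :=
  (TensorProduct.rid k M).toLinearMap ∘ₗ LinearMap.lTensor M f

variable {M N P M' N' : Type*} [AddCommGroup M] [Module k M] [AddCommGroup N] [Module k N]
  [AddCommGroup P] [Module k P] [AddCommGroup M'] [Module k M'] [AddCommGroup N'] [Module k N']

@[simp] lemma contr_tmul (f : N →ₗ[k] k) (m : M) (n : N) :
    contr k M N f (m ⊗ₜ[k] n) = f n • m := by simp [contr]

lemma contr_natural (f : N →ₗ[k] k) (φ : M →ₗ[k] M') :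
    φ ∘ₗ contr k M N f = contr k M' N f ∘ₗ LinearMap.rTensor N φ := by
  apply TensorProduct.ext'; intro m n; simp

lemma contr_comp (f : N →ₗ[k] k) (ψ : N' →ₗ[k] N) :
    contr k M N' (f ∘ₗ ψ) = contr k M N f ∘ₗ LinearMap.lTensor M ψ := by
  apply TensorProduct.ext'; intro m n; simp

lemma contr_assoc (g : P →ₗ[k] k) :
    contr k (M ⊗[k] N) P g ∘ₗ (TensorProduct.assoc k M N P).symm.toLinearMap
      = LinearMap.lTensor M (contr k N P g) := by
  apply TensorProduct.ext'; intro m w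
  induction w using TensorProduct.induction_on with
  | zero => simp [tmul_zero]
  | tmul n p => simp [tmul_smul, smul_tmul']
  | add u v hu hv => simp only [tmul_add, map_add, hu, hv]

variable (H : Type*) [Ring H] [HopfAlgebra k H]

/-- `Tmap f : h ↦ Σ h₁ f(h₂)`. -/
def Tmap (f : H →ₗ[k] k) : H →ₗ[k] H := contr k H H f ∘ₗ Coalgebra.comul

lemma Tmap_counit : Tmap k H (Coalgebra.counit) = LinearMap.id := by
  apply LinearMap.ext; intro h
  simp only [Tmap, contr, LinearMap.coe_comp, Function.comp_apply, LinearEquiv.coe_coe,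
    LinearMap.id_coe, id_eq]
  rw [Coalgebra.lTensor_counit_comul]
  simp

lemma Tmap_comp (f g : H →ₗ[k] k) :
    Tmap k H f ∘ₗ Tmap k H g = Tmap k H (f ∘ₗ Tmap k H g) := by
  apply LinearMap.ext; intro h
  have s1 : Coalgebra.comul (R := k) (Tmap k H g h)
      = contr k (H ⊗[k] H) H g (LinearMap.rTensor H Coalgebra.comul (Coalgebra.comul h)) := by
    simpa [Tmap] using LinearMap.congr_fun
      (contr_natural k g (Coalgebra.comul (R := k) (A := H))) (Coalgebra.comul (R := k) h)
  have s2 : LinearMap.rTensor H (Coalgebra.comul (R := k) (A := H)) (Coalgebra.comul h)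
      = (TensorProduct.assoc k H H H).symm
          (LinearMap.lTensor H Coalgebra.comul (Coalgebra.comul h)) :=
    (Coalgebra.coassoc_symm_apply h).symm
  have s3 := LinearMap.congr_fun (contr_assoc k (M := H) (N := H) (P := H) g)
      (LinearMap.lTensor H (Coalgebra.comul (R := k) (A := H)) (Coalgebra.comul h))
  simp only [LinearMap.coe_comp, Function.comp_apply, LinearEquiv.coe_coe] at s3 ⊢
  rw [show Tmap k H f ((Tmap k H g) h) = contr k H H f (Coalgebra.comul (Tmap k H g h)) from rfl,
    s1, s2, s3, Tmap, contr_comp k f (Tmap k H g)]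
  simp only [LinearMap.coe_comp, Function.comp_apply]
  rw [show Tmap k H g = contr k H H g ∘ₗ Coalgebra.comul from rfl, LinearMap.lTensor_comp]
  rfl

variable {H} in
lemma mem_range_rTensor_of_contr (W : Submodule k M) (u : M ⊗[k] H)
    (hu : ∀ f : H →ₗ[k] k, contr k M H f u ∈ W) :
    u ∈ LinearMap.range (LinearMap.rTensor H (Submodule.subtype W)) := by
  classical
  obtain ⟨c, hc⟩ := TensorProduct.eq_repr_basis_right (𝒞 := Module.Basis.ofVectorSpace k H) (x := u)
  set b := Module.Basis.ofVectorSpace k H with hb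
  have hcoef : ∀ j, c j ∈ W := by
    intro j
    have hj : contr k M H (b.coord j) u = c j := by
      rw [← hc, Finsupp.sum, map_sum]
      have : ∀ i ∈ c.support,
          contr k M H (b.coord j) (c i ⊗ₜ[k] (b i : H)) = if j = i then c i else 0 := by
        intro i _
        rw [contr_tmul, Module.Basis.coord_apply, Module.Basis.repr_self, Finsupp.single_apply]
        rcases eq_or_ne j i with hij | hij
        · subst hij; simp
        · simp [hij, Ne.symm hij]
      rw [Finset.sum_congr rfl this, Finset.sum_ite_eq]
      by_cases hjs : j ∈ c.support
      · simp [hjs]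
      · simp [hjs, Finsupp.notMem_support_iff.mp hjs]
    rw [← hj]; exact hu _
  refine ⟨c.support.sum fun i => (⟨c i, hcoef i⟩ : W) ⊗ₜ[k] (b i : H), ?_⟩
  rw [map_sum, ← hc, Finsupp.sum]
  exact Finset.sum_congr rfl fun i _ => by simp

variable (A : Type*) [Ring A] [Algebra k A]

/-- `Emap f = I_A ⊗ Tmap f` on `A ⊗ H`. -/
def Emap (f : H →ₗ[k] k) : A ⊗[k] H →ₗ[k] A ⊗[k] H := LinearMap.lTensor A (Tmap k H f)

lemma contr_trivialCoaction (f : H →ₗ[k] k) :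
    contr k (A ⊗[k] H) H f ∘ₗ trivialCoaction k H A = Emap k H A f := by
  rw [trivialCoaction, ← LinearMap.comp_assoc, contr_assoc, ← LinearMap.lTensor_comp]
  rfl

lemma Emap_counit : Emap k H A (Coalgebra.counit) = LinearMap.id := by
  rw [Emap, Tmap_counit, LinearMap.lTensor_id]

lemma Emap_comp (f g : H →ₗ[k] k) :
    Emap k H A f ∘ₗ Emap k H A g = Emap k H A (f ∘ₗ Tmap k H g) := by
  rw [Emap, Emap, Emap, ← LinearMap.lTensor_comp, Tmap_comp]

lemma trivialCoaction_mul (x y : A ⊗[k] H) :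
    trivialCoaction k H A (x * y) = trivialCoaction k H A x * trivialCoaction k H A y := by
  have key : trivialCoaction k H A
      = (((Algebra.TensorProduct.assoc k k k A H H).symm.toAlgHom).comp
          (Algebra.TensorProduct.map (AlgHom.id k A) (Bialgebra.comulAlgHom k H))).toLinearMap := by
    apply TensorProduct.ext'
    intro a h
    simp only [trivialCoaction, LinearMap.coe_comp, Function.comp_apply,
      LinearMap.lTensor_tmul, AlgHom.toLinearMap_apply, AlgHom.coe_comp,
      Algebra.TensorProduct.map_tmul, AlgHom.coe_id, id_eq, AlgEquiv.toAlgHom_eq_coe,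
      AlgHom.coe_coe, Bialgebra.comulAlgHom_apply]
    rfl
  rw [key]
  simp only [AlgHom.toLinearMap_apply]
  exact map_mul _ x y

lemma tmul_one_mul_contr (f : H →ₗ[k] k) (z : A ⊗[k] H) (u : (A ⊗[k] H) ⊗[k] H) :
    z * contr k (A ⊗[k] H) H f u = contr k (A ⊗[k] H) H f ((z ⊗ₜ[k] (1 : H)) * u) := by
  induction u using TensorProduct.induction_on with
  | zero => simp
  | tmul y h =>
    rw [contr_tmul, Algebra.TensorProduct.tmul_mul_tmul, one_mul, contr_tmul, mul_smul_comm]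
  | add u v hu hv => rw [map_add, mul_add, mul_add, map_add, hu, hv]

lemma mul_mem_range_rTensor (W : NonUnitalSubalgebra k (A ⊗[k] H))
    {u v : (A ⊗[k] H) ⊗[k] H}
    (hu : u ∈ LinearMap.range (LinearMap.rTensor H (Submodule.subtype W.toSubmodule)))
    (hv : v ∈ LinearMap.range (LinearMap.rTensor H (Submodule.subtype W.toSubmodule))) :
    u * v ∈ LinearMap.range (LinearMap.rTensor H (Submodule.subtype W.toSubmodule)) := by
  obtain ⟨p, rfl⟩ := hu
  obtain ⟨q, rfl⟩ := hv
  induction p using TensorProduct.induction_on with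
  | zero => rw [map_zero, zero_mul]; exact zero_mem _
  | add p₁ p₂ h₁ h₂ => rw [map_add, add_mul]; exact add_mem h₁ h₂
  | tmul w h =>
    induction q using TensorProduct.induction_on with
    | zero => rw [map_zero, mul_zero]; exact zero_mem _
    | add q₁ q₂ h₁ h₂ => rw [map_add, mul_add]; exact add_mem h₁ h₂
    | tmul w' h' =>
      refine ⟨(⟨(w : A ⊗[k] H) * (w' : A ⊗[k] H),
        W.mul_mem (NonUnitalSubalgebra.mem_toSubmodule W |>.mp w.2)
          (NonUnitalSubalgebra.mem_toSubmodule W |>.mp w'.2)⟩ :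
            W.toSubmodule) ⊗ₜ[k] (h * h'), ?_⟩
      simp [Algebra.TensorProduct.tmul_mul_tmul]

end AuxDefs

noncomputable section

variable (k : Type*) [Field k] (H A : Type*) [Ring H] [HopfAlgebra k H] [Ring A] [Algebra k A]

/-- **Globalization theorem for partial coactions.**  Let `(A, ρ̄)` be a partial
`H`-comodule algebra, and let `B` be the smallest `H`-subcomodule subalgebra of
`(A ⊗ H, δ = I ⊗ Δ)` containing `ρ̄(A)`.  Then `θ = ρ̄ : A → B` is an injective algebra
homomorphism, `θ(A)` is a right ideal of `B` with unity `θ(1_A)`, the only `H`-subcomodule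
subalgebra of `B` containing `θ(A)` is `B` itself, and
`(θ ⊗ I) ρ̄(a) = (θ(1_A) ⊗ 1_H) δ(θ(a))` for all `a ∈ A`; that is, `(B, δ|B, θ)` is an
enveloping coaction of `(A, ρ̄)`. -/
theorem enveloping_coaction_exists
    (ρ : A →ₗ[k] A ⊗[k] H) (hρ : IsPartialCoaction k H A ρ)
    (B : NonUnitalSubalgebra k (A ⊗[k] H))
    -- `B` is the smallest `H`-subcomodule subalgebra of `A ⊗ H` containing `ρ̄(A)`:
    (hBsub : IsSubcomoduleSubalg k H A B)
    (hBA : Set.range ρ ⊆ (B : Set (A ⊗[k] H)))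
    (hBmin : ∀ W : NonUnitalSubalgebra k (A ⊗[k] H),
      IsSubcomoduleSubalg k H A W → Set.range ρ ⊆ (W : Set (A ⊗[k] H)) → B ≤ W) :
    -- `θ = ρ̄` is injective (it is an algebra map by the first partial coaction axiom)
    Function.Injective ρ ∧
    -- `θ(A)` is a right ideal of `B` with unity `θ(1_A)`
    (∀ (a : A), ∀ x ∈ B, ρ a * x ∈ Set.range ρ) ∧
    (∀ a : A, ρ 1 * ρ a = ρ a ∧ ρ a * ρ 1 = ρ a) ∧
    -- `B` is generated by `θ(A)` as an `H`-comodule algebra: the only `H`-subcomodule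
    -- subalgebra of `B` containing `θ(A)` is `B` itself
    (∀ W : NonUnitalSubalgebra k (A ⊗[k] H), W ≤ B → IsSubcomoduleSubalg k H A W →
      Set.range ρ ⊆ (W : Set (A ⊗[k] H)) → W = B) ∧
    -- compatibility: `(θ ⊗ I) ρ̄(a) = (θ(1_A) ⊗ 1_H) δ(θ(a))`
    (∀ a : A,
      (LinearMap.rTensor H ρ) (ρ a) =
        (ρ 1 ⊗ₜ[k] (1 : H)) * trivialCoaction k H A (ρ a)) := by
  -- the compatibility condition is precisely the coassociativity axiom
  have hcompat : ∀ a : A,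
      (LinearMap.rTensor H ρ) (ρ a) =
        (ρ 1 ⊗ₜ[k] (1 : H)) * trivialCoaction k H A (ρ a) := by
    intro a
    simpa [trivialCoaction] using hρ.coassoc a
  -- the generating set and the subalgebra it generates
  set Vset : Set (A ⊗[k] H) := {x | ∃ f : H →ₗ[k] k, ∃ a : A, x = Emap k H A f (ρ a)} with hVset
  set W : NonUnitalSubalgebra k (A ⊗[k] H) := NonUnitalAlgebra.adjoin k Vset with hW
  have hρV : Set.range ρ ⊆ Vset := by
    rintro x ⟨a, rfl⟩
    exact ⟨Coalgebra.counit, a, by rw [Emap_counit]; rfl⟩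
  have hρW : Set.range ρ ⊆ (W : Set (A ⊗[k] H)) :=
    hρV.trans (NonUnitalAlgebra.subset_adjoin k)
  -- `W` is a subcomodule subalgebra
  have hWsub : IsSubcomoduleSubalg k H A W := by
    intro w hw
    induction hw using NonUnitalAlgebra.adjoin_induction with
    | mem x hx =>
      obtain ⟨g, a, rfl⟩ := hx
      apply mem_range_rTensor_of_contr
      intro f
      have h1 := LinearMap.congr_fun (contr_trivialCoaction k H A f) (Emap k H A g (ρ a))
      simp only [LinearMap.coe_comp, Function.comp_apply] at h1
      rw [h1, ← LinearMap.comp_apply, Emap_comp]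
      rw [NonUnitalSubalgebra.mem_toSubmodule]
      exact NonUnitalAlgebra.subset_adjoin k ⟨f ∘ₗ Tmap k H g, a, rfl⟩
    | add x y hx hy ihx ihy => rw [map_add]; exact add_mem ihx ihy
    | zero => rw [map_zero]; exact zero_mem _
    | mul x y hx hy ihx ihy => rw [trivialCoaction_mul]; exact mul_mem_range_rTensor k H A W ihx ihy
    | smul r x hx ihx => rw [map_smul]; exact Submodule.smul_mem _ _ ihx
  have hBW : B ≤ W := hBmin W hWsub hρW
  -- the right-ideal property on `W`
  have hRI : ∀ x ∈ W, ∀ a : A, ρ a * x ∈ Set.range ρ := by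
    intro x hx
    induction hx using NonUnitalAlgebra.adjoin_induction with
    | mem x hx =>
      obtain ⟨f, b, rfl⟩ := hx
      intro a
      have h1 := LinearMap.congr_fun (contr_trivialCoaction k H A f) (ρ b)
      simp only [LinearMap.coe_comp, Function.comp_apply] at h1
      rw [← h1, tmul_one_mul_contr]
      have h2 : (ρ a ⊗ₜ[k] (1 : H)) * trivialCoaction k H A (ρ b)
          = (ρ a ⊗ₜ[k] (1 : H)) * ((LinearMap.rTensor H ρ) (ρ b)) := by
        rw [hcompat b, ← mul_assoc, Algebra.TensorProduct.tmul_mul_tmul, ← hρ.map_mul,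
          mul_one, one_mul]
      rw [h2, ← tmul_one_mul_contr]
      have h3 := LinearMap.congr_fun (contr_natural k (M := A) (M' := A ⊗[k] H) f ρ) (ρ b)
      simp only [LinearMap.coe_comp, Function.comp_apply] at h3
      rw [← h3, ← hρ.map_mul]
      exact ⟨a * contr k A H f (ρ b), rfl⟩
    | add x y hx hy ihx ihy =>
      intro a
      obtain ⟨c, hc⟩ := ihx a
      obtain ⟨d, hd⟩ := ihy a
      exact ⟨c + d, by rw [map_add, hc, hd, mul_add]⟩
    | zero => intro a; exact ⟨0, by rw [map_zero, mul_zero]⟩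
    | mul x y hx hy ihx ihy =>
      intro a
      obtain ⟨c, hc⟩ := ihx a
      obtain ⟨d, hd⟩ := ihy c
      exact ⟨d, by rw [hd, hc, mul_assoc]⟩
    | smul r x hx ihx =>
      intro a
      obtain ⟨c, hc⟩ := ihx a
      exact ⟨r • c, by rw [map_smul, hc, mul_smul_comm]⟩
  refine ⟨?_, ?_, ?_, ?_, hcompat⟩
  · intro a b hab
    rw [← hρ.counit_id a, ← hρ.counit_id b, hab]
  · intro a x hx
    exact hRI x (hBW hx) a
  · intro a
    exact ⟨by rw [← hρ.map_mul, one_mul], by rw [← hρ.map_mul, mul_one]⟩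
  · intro W' h1 h2 h3
    exact le_antisymm h1 (hBmin W' h2 h3)


end
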